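/- Let F, G : H → ℝ be convex functions on a real inner product space H, with F(h) = λ‖h‖² + G_P(h) and G(h) = λ‖h‖² + G_U(h), where G_P is convex differentiable and G_U is convex, λ > 0. If h* is a minimizer of F and h_U is a minimizer of G, then λ‖h* - h_U‖² ≤ max_{h ∈ {h*, h_U}} |G_P(h) - G_U(h)|; more precisely, 2λ‖h* - h_U‖² ≤ (G_U(h*) - G_U(h_U)) + (G_P(h_U) - G_P(h*)) ≤ 2 sup_{h ∈ H} |G_P(h) - G_U(h)|. -/

import Mathlib

open Filter Set Topology

/-- Strong-convexity inequality at a minimizer of `λ‖·‖² + g` with `g` convex. -/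
lemma strong_min_ineq {H : Type*} [NormedAddCommGroup H] [InnerProductSpace ℝ H]
    (lam : ℝ) (hlam : 0 < lam) (g : H → ℝ) (hg : ConvexOn ℝ Set.univ g)
    (x : H) (hmin : ∀ y : H, lam * ‖x‖ ^ 2 + g x ≤ lam * ‖y‖ ^ 2 + g y) (h : H) :
    lam * ‖h - x‖ ^ 2 ≤ (lam * ‖h‖ ^ 2 + g h) - (lam * ‖x‖ ^ 2 + g x) := by
  set d : ℝ := ‖h - x‖ ^ 2 with hd
  have claim : ∀ t : ℝ, t ∈ Set.Ioo (0:ℝ) 1 →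
      lam * (1 - t) * d ≤ (lam * ‖h‖ ^ 2 + g h) - (lam * ‖x‖ ^ 2 + g x) := by
    intro t ht
    obtain ⟨ht0, ht1⟩ := ht
    set y : H := (1 - t) • x + t • h with hy
    have hnorm : ‖y‖ ^ 2 = (1 - t) * ‖x‖ ^ 2 + t * ‖h‖ ^ 2 - t * (1 - t) * d := by
      have e : ∀ u : H, ‖u‖ ^ 2 = (inner ℝ u u : ℝ) := fun u =>
        (real_inner_self_eq_norm_sq u).symm
      rw [hd]
      rw [e, e, e, e, hy]
      simp only [inner_add_left, inner_add_right, inner_sub_left, inner_sub_right,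
        inner_smul_left, inner_smul_right, RCLike.conj_to_real, real_inner_comm x h]
      ring
    have hconv : g y ≤ (1 - t) * g x + t * g h := by
      have := hg.2 (Set.mem_univ x) (Set.mem_univ h)
        (by linarith : (0:ℝ) ≤ 1 - t) (le_of_lt ht0) (by ring)
      simpa [hy] using this
    have hm := hmin y
    have : lam * ‖x‖ ^ 2 + g x ≤
        lam * ((1 - t) * ‖x‖ ^ 2 + t * ‖h‖ ^ 2 - t * (1 - t) * d) +
        ((1 - t) * g x + t * g h) := by
      calc lam * ‖x‖ ^ 2 + g x ≤ lam * ‖y‖ ^ 2 + g y := hm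
        _ ≤ _ := by rw [hnorm]; linarith
    have key : t * (lam * (1 - t) * d) ≤
        t * ((lam * ‖h‖ ^ 2 + g h) - (lam * ‖x‖ ^ 2 + g x)) := by nlinarith
    exact le_of_mul_le_mul_left (by linarith [key]) ht0
  have tlim : Tendsto (fun t : ℝ => lam * (1 - t) * d) (𝓝[>] (0:ℝ)) (𝓝 (lam * d)) := by
    have hc : Continuous fun t : ℝ => lam * (1 - t) * d := by continuity
    have := (hc.tendsto 0).mono_left (nhdsWithin_le_nhds (s := Set.Ioi (0:ℝ)))
    simpa using this
  refine le_of_tendsto tlim ?_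
  filter_upwards [Ioo_mem_nhdsGT_of_mem (by norm_num : (0:ℝ) ∈ Set.Ico (0:ℝ) 1)] with t ht
  exact claim t ht

/-- If `h*` minimizes `F(h) = λ‖h‖² + G_P(h)` and `h_U` minimizes
`G(h) = λ‖h‖² + G_U(h)`, with `G_P` convex differentiable and `G_U` convex, then
`2λ‖h* - h_U‖² ≤ (G_U(h*) - G_U(h_U)) + (G_P(h_U) - G_P(h*)) ≤ 2 sup_h |G_P(h) - G_U(h)|`,
the supremum being expressed through a uniform bound `C`. -/
theorem regularized_minimizers_distance_bound
    {H : Type*} [NormedAddCommGroup H] [InnerProductSpace ℝ H] [CompleteSpace H]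
    (lam : ℝ) (hlam : 0 < lam) (GP GU : H → ℝ)
    (hGPconv : ConvexOn ℝ Set.univ GP) (hGPdiff : Differentiable ℝ GP)
    (hGUconv : ConvexOn ℝ Set.univ GU)
    (hstar hU : H)
    (hmin : ∀ h : H, lam * ‖hstar‖ ^ 2 + GP hstar ≤ lam * ‖h‖ ^ 2 + GP h)
    (hminU : ∀ h : H, lam * ‖hU‖ ^ 2 + GU hU ≤ lam * ‖h‖ ^ 2 + GU h)
    (C : ℝ) (hC : ∀ h : H, |GP h - GU h| ≤ C) :
    2 * lam * ‖hstar - hU‖ ^ 2 ≤ (GU hstar - GU hU) + (GP hU - GP hstar) ∧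
    (GU hstar - GU hU) + (GP hU - GP hstar) ≤ 2 * C ∧
    lam * ‖hstar - hU‖ ^ 2 ≤ max |GP hstar - GU hstar| |GP hU - GU hU| := by
  have h1 := strong_min_ineq lam hlam GP hGPconv hstar hmin hU
  have h2 := strong_min_ineq lam hlam GU hGUconv hU hminU hstar
  have hnorm : ‖hU - hstar‖ = ‖hstar - hU‖ := norm_sub_rev _ _
  rw [hnorm] at h1
  have hmain : 2 * lam * ‖hstar - hU‖ ^ 2 ≤ (GU hstar - GU hU) + (GP hU - GP hstar) := by
    nlinarith
  refine ⟨hmain, ?_, ?_⟩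
  · have a1 := hC hstar
    have a2 := hC hU
    have b1 := abs_le.mp a1
    have b2 := abs_le.mp a2
    linarith [b1.1, b1.2, b2.1, b2.2]
  · have c1 : GU hstar - GP hstar ≤ |GP hstar - GU hstar| := by
      rw [abs_sub_comm]; exact le_abs_self _
    have c2 : GP hU - GU hU ≤ |GP hU - GU hU| := le_abs_self _
    have m1 : |GP hstar - GU hstar| ≤ max |GP hstar - GU hstar| |GP hU - GU hU| :=
      le_max_left _ _
    have m2 : |GP hU - GU hU| ≤ max |GP hstar - GU hstar| |GP hU - GU hU| :=
      le_max_right _ _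
    linarith
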